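/- The binary cubic x₀x₁² cannot be written as a ℂ-linear combination a·L³ + b·M³ of cubes of two linear forms L, M ∈ ℂ[x₀,x₁]₁. -/
import Mathlib


open MvPolynomial

private lemma dsum_eq' (d : Fin 2 →₀ ℕ) : (d.sum fun _ n => n) = d 0 + d 1 := by
  rw [Finsupp.sum_fintype _ _ (fun _ => rfl)]
  simp [Fin.sum_univ_two]

private lemma deg1_decomp (L : MvPolynomial (Fin 2) ℂ) (hL : L.IsHomogeneous 1) :
    L = C (coeff (Finsupp.single 0 1) L) * X 0 + C (coeff (Finsupp.single 1 1) L) * X 1 := by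
  ext d
  rcases eq_or_ne (d.sum fun _ n => n) 1 with h | h
  · have h01 : d 0 + d 1 = 1 := by rw [← dsum_eq']; exact h
    have : d = Finsupp.single 0 1 ∨ d = Finsupp.single 1 1 := by
      rcases Nat.add_eq_one_iff.mp h01 with ⟨h0, h1⟩ | ⟨h0, h1⟩
      · right; ext i; fin_cases i <;> simp [h0, h1]
      · left; ext i; fin_cases i <;> simp [h0, h1]
    rcases this with rfl | rfl <;>
      simp [coeff_C_mul, coeff_X', Finsupp.single_eq_single_iff]
  · rw [hL.coeff_eq_zero h]
    have h0 : d ≠ Finsupp.single 0 1 := by rintro rfl; simp [dsum_eq'] at h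
    have h1 : d ≠ Finsupp.single 1 1 := by rintro rfl; simp [dsum_eq'] at h
    simp [coeff_C_mul, coeff_X', Ne.symm h0, Ne.symm h1]

private lemma expand3' (p q a : ℂ) :
    (C a * (C p * X 0 + C q * X 1 : MvPolynomial (Fin 2) ℂ)^3) =
    C (a*p^3) * X 0^3 + C (3*a*p^2*q) * X 0^2 * X 1 + C (3*a*p*q^2) * X 0 * X 1^2
      + C (a*q^3) * X 1^3 := by
  simp only [C_mul, C_pow, map_ofNat]
  ring

private lemma c30 (p q a : ℂ) :
    coeff (Finsupp.single 0 3) (C a * (C p * X 0 + C q * X 1 : MvPolynomial (Fin 2) ℂ)^3)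
      = a * p^3 := by
  rw [expand3']
  simp only [X, C_apply, monomial_mul, monomial_pow, one_pow, mul_one, coeff_add, coeff_monomial]
  norm_num [Finsupp.ext_iff, Fin.forall_fin_two]

private lemma c21 (p q a : ℂ) :
    coeff (Finsupp.single 0 2 + Finsupp.single 1 1)
      (C a * (C p * X 0 + C q * X 1 : MvPolynomial (Fin 2) ℂ)^3) = 3*a*p^2*q := by
  rw [expand3']
  simp only [X, C_apply, monomial_mul, monomial_pow, one_pow, mul_one, coeff_add, coeff_monomial]
  norm_num [Finsupp.ext_iff, Fin.forall_fin_two]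

private lemma c12 (p q a : ℂ) :
    coeff (Finsupp.single 0 1 + Finsupp.single 1 2)
      (C a * (C p * X 0 + C q * X 1 : MvPolynomial (Fin 2) ℂ)^3) = 3*a*p*q^2 := by
  rw [expand3']
  simp only [X, C_apply, monomial_mul, monomial_pow, one_pow, mul_one, coeff_add, coeff_monomial]
  norm_num [Finsupp.ext_iff, Fin.forall_fin_two]

private lemma c03 (p q a : ℂ) :
    coeff (Finsupp.single 1 3) (C a * (C p * X 0 + C q * X 1 : MvPolynomial (Fin 2) ℂ)^3)
      = a*q^3 := by
  rw [expand3']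
  simp only [X, C_apply, monomial_mul, monomial_pow, one_pow, mul_one, coeff_add, coeff_monomial]
  norm_num [Finsupp.ext_iff, Fin.forall_fin_two]

private lemma l30 : coeff (Finsupp.single 0 3) (X 0 * X 1 ^ 2 : MvPolynomial (Fin 2) ℂ) = 0 := by
  simp [X, X_pow_eq_monomial, monomial_pow, monomial_mul, coeff_monomial, Finsupp.ext_iff,
    Fin.forall_fin_two]

private lemma l21 : coeff (Finsupp.single 0 2 + Finsupp.single 1 1)
    (X 0 * X 1 ^ 2 : MvPolynomial (Fin 2) ℂ) = 0 := by
  simp [X, X_pow_eq_monomial, monomial_pow, monomial_mul, coeff_monomial, Finsupp.ext_iff,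
    Fin.forall_fin_two]

private lemma l12 : coeff (Finsupp.single 0 1 + Finsupp.single 1 2)
    (X 0 * X 1 ^ 2 : MvPolynomial (Fin 2) ℂ) = 1 := by
  simp [X, X_pow_eq_monomial, monomial_pow, monomial_mul, coeff_monomial, Finsupp.ext_iff,
    Fin.forall_fin_two]

private lemma l03 : coeff (Finsupp.single 1 3) (X 0 * X 1 ^ 2 : MvPolynomial (Fin 2) ℂ) = 0 := by
  simp [X, X_pow_eq_monomial, monomial_pow, monomial_mul, coeff_monomial, Finsupp.ext_iff,
    Fin.forall_fin_two]

private lemma algebra_contra (a b p q r s : ℂ)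
    (h1 : a*p^3 + b*r^3 = 0) (h2 : a*p^2*q + b*r^2*s = 0)
    (h3 : a*p*q^2 + b*r*s^2 = 1/3) (h4 : a*q^3 + b*s^3 = 0) : False := by
  have key1 : a*b*p*r*(p*s - q*r)^2 = 0 := by
    linear_combination (a*p*q^2 + b*r*s^2) * h1 - (a*p^2*q + b*r^2*s) * h2
  have key2 : a*b*q*s*(p*s - q*r)^2 = -(1/9) := by
    linear_combination (a*q^3 + b*s^3) * h2 - (a*p*q^2 + b*r*s^2 + 1/3) * h3
  have hpr : p * r = 0 := by
    linear_combination 9*p*r*key2 - 9*q*s*key1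
  rcases mul_eq_zero.mp hpr with hp | hr
  · subst hp
    have hbr : b * r^3 = 0 := by linear_combination h1
    rcases mul_eq_zero.mp hbr with hb | hr3
    · subst hb; norm_num at key2
    · have hr : r = 0 := by
        exact pow_eq_zero_iff (by norm_num) |>.mp hr3
      subst hr; norm_num at key2
  · subst hr
    have hap : a * p^3 = 0 := by linear_combination h1
    rcases mul_eq_zero.mp hap with ha | hp3
    · subst ha; norm_num at key2
    · have hp : p = 0 := pow_eq_zero_iff (by norm_num) |>.mp hp3
      subst hp; norm_num at key2

theorem x0x1sq_not_sum_of_two_cubes (L M : MvPolynomial (Fin 2) ℂ)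
    (hL : L.IsHomogeneous 1) (hM : M.IsHomogeneous 1) (a b : ℂ) :
    X 0 * X 1 ^ 2 ≠ C a * L ^ 3 + C b * M ^ 3 := by
  intro heq
  set p := coeff (Finsupp.single 0 1) L with hp
  set q := coeff (Finsupp.single 1 1) L with hq
  set r := coeff (Finsupp.single 0 1) M with hr
  set s := coeff (Finsupp.single 1 1) M with hs
  rw [deg1_decomp L hL, deg1_decomp M hM] at heq
  have e1 := congrArg (coeff (Finsupp.single 0 3)) heq
  have e2 := congrArg (coeff (Finsupp.single 0 2 + Finsupp.single 1 1)) heq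
  have e3 := congrArg (coeff (Finsupp.single 0 1 + Finsupp.single 1 2)) heq
  have e4 := congrArg (coeff (Finsupp.single 1 3)) heq
  rw [coeff_add, c30, c30, l30] at e1
  rw [coeff_add, c21, c21, l21] at e2
  rw [coeff_add, c12, c12, l12] at e3
  rw [coeff_add, c03, c03, l03] at e4
  exact algebra_contra a b p q r s (by linear_combination -e1) (by linear_combination -e2/3)
    (by linear_combination -e3/3) (by linear_combination -e4)
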